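/- For all x in (0, π) and t in [0,1], sin(t·x) − t·x·cos(t·x) ≥ t³·(sin(x) − x·cos(x)). -/

import Mathlib

noncomputable def gAux (u : ℝ) : ℝ := Real.sin u - u * Real.cos u

lemma gAux_hasDeriv (u : ℝ) : HasDerivAt gAux (u * Real.sin u) u := by
  have h2 : HasDerivAt (fun v : ℝ => v * Real.cos v)
      (1 * Real.cos u + u * (-Real.sin u)) u :=
    (hasDerivAt_id u).mul (Real.hasDerivAt_cos u)
  have := (Real.hasDerivAt_sin u).sub h2
  refine HasDerivAt.congr_deriv this ?_
  ring

lemma gAux_cont : Continuous gAux :=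
  Real.continuous_sin.sub (continuous_id.mul Real.continuous_cos)

lemma gAux_nonneg : ∀ u ∈ Set.Icc (0:ℝ) Real.pi, 0 ≤ gAux u := by
  have hmono : MonotoneOn gAux (Set.Icc 0 Real.pi) := by
    apply monotoneOn_of_deriv_nonneg (convex_Icc _ _) gAux_cont.continuousOn
    · intro u hu
      exact ((gAux_hasDeriv u).differentiableAt).differentiableWithinAt
    · intro u hu
      rw [interior_Icc] at hu
      rw [(gAux_hasDeriv u).deriv]
      exact mul_nonneg hu.1.le (Real.sin_nonneg_of_nonneg_of_le_pi hu.1.le hu.2.le)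
  intro u hu
  have h0 : gAux 0 = 0 := by simp [gAux]
  have := hmono (Set.left_mem_Icc.2 Real.pi_pos.le) hu hu.1
  linarith

noncomputable def phiAux (u : ℝ) : ℝ := u ^ 2 * Real.sin u - 3 * gAux u

lemma phiAux_hasDeriv (u : ℝ) : HasDerivAt phiAux (-(u * gAux u)) u := by
  have h1 : HasDerivAt (fun v : ℝ => v ^ 2 * Real.sin v)
      ((2 * u) * Real.sin u + u ^ 2 * Real.cos u) u := by
    have := (hasDerivAt_pow 2 u).mul (Real.hasDerivAt_sin u)
    refine HasDerivAt.congr_deriv this ?_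
    ring
  have := h1.sub ((gAux_hasDeriv u).const_mul 3)
  refine HasDerivAt.congr_deriv this ?_
  simp [gAux]
  ring

lemma phiAux_nonpos : ∀ u ∈ Set.Icc (0:ℝ) Real.pi, phiAux u ≤ 0 := by
  have hcont : Continuous phiAux := by
    exact (continuous_pow 2 |>.mul Real.continuous_sin).sub (continuous_const.mul gAux_cont)
  have hanti : AntitoneOn phiAux (Set.Icc 0 Real.pi) := by
    apply antitoneOn_of_deriv_nonpos (convex_Icc _ _) hcont.continuousOn
    · intro u hu
      exact ((phiAux_hasDeriv u).differentiableAt).differentiableWithinAt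
    · intro u hu
      rw [interior_Icc] at hu
      rw [(phiAux_hasDeriv u).deriv]
      have := gAux_nonneg u ⟨hu.1.le, hu.2.le⟩
      have hu0 : (0:ℝ) ≤ u := hu.1.le
      simpa using neg_nonpos.mpr (mul_nonneg hu0 this)
  intro u hu
  have h0 : phiAux 0 = 0 := by simp [phiAux, gAux]
  have := hanti (Set.left_mem_Icc.2 Real.pi_pos.le) hu hu.1
  linarith

lemma key_anti : AntitoneOn (fun u => gAux u / u ^ 3) (Set.Ioc 0 Real.pi) := by
  apply antitoneOn_of_deriv_nonpos (convex_Ioc _ _)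
  · apply ContinuousOn.div gAux_cont.continuousOn (continuousOn_pow 3)
    intro u hu
    have h0 : (0:ℝ) < u := hu.1
    positivity
  · intro u hu
    rw [interior_Ioc] at hu
    have h0 : (0:ℝ) < u := hu.1
    have hu0 : u ^ 3 ≠ 0 := by positivity
    exact (((gAux_hasDeriv u).div (hasDerivAt_pow 3 u) hu0)).differentiableAt.differentiableWithinAt
  · intro u hu
    rw [interior_Ioc] at hu
    have hu0 : (0:ℝ) < u := hu.1
    have hu3 : u ^ 3 ≠ 0 := by positivity
    have hd := (gAux_hasDeriv u).div (hasDerivAt_pow 3 u) hu3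
    rw [show (fun u => gAux u / u ^ 3) = gAux / fun x => x ^ 3 from rfl, hd.deriv]
    apply div_nonpos_of_nonpos_of_nonneg
    · have hφ := phiAux_nonpos u ⟨hu0.le, hu.2.le⟩
      simp only [phiAux] at hφ
      push_cast
      norm_num
      nlinarith [mul_nonpos_of_nonneg_of_nonpos (sq_nonneg u) hφ]
    · positivity

theorem stmt_0 (x t : ℝ) (hx0 : 0 < x) (hxpi : x < Real.pi)
    (ht0 : 0 ≤ t) (ht1 : t ≤ 1) :
    Real.sin (t * x) - t * x * Real.cos (t * x) ≥
      t ^ 3 * (Real.sin x - x * Real.cos x) := by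
  rcases eq_or_lt_of_le ht0 with rfl | ht0'
  · simp
  · have htx0 : 0 < t * x := mul_pos ht0' hx0
    have htxle : t * x ≤ x := by nlinarith
    have htx : t * x ∈ Set.Ioc (0:ℝ) Real.pi := ⟨htx0, htxle.trans hxpi.le⟩
    have hxm : x ∈ Set.Ioc (0:ℝ) Real.pi := ⟨hx0, hxpi.le⟩
    have hkey := key_anti htx hxm htxle
    simp only at hkey
    have hx3 : (0:ℝ) < x ^ 3 := by positivity
    have htx3 : (0:ℝ) < (t * x) ^ 3 := by positivity
    have h1 : gAux x * (t * x) ^ 3 ≤ gAux (t * x) * x ^ 3 :=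
      (div_le_div_iff₀ hx3 htx3).mp hkey
    have h2 : t ^ 3 * gAux x ≤ gAux (t * x) := by
      have hexp : (t * x) ^ 3 = t ^ 3 * x ^ 3 := by ring
      rw [hexp] at h1
      have := le_of_mul_le_mul_right (by linarith [h1] : t ^ 3 * gAux x * x ^ 3 ≤ gAux (t * x) * x ^ 3) hx3
      linarith
    simpa [gAux] using h2
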